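/- Let w₀, w₁ be two finite nonempty words with w₀w₁ ≠ w₁w₀, and define the morphism γ on {0,1}* by γ(0) = w₀, γ(1) = w₁, extended to infinite words. Then for an infinite binary word a, the infinite word γ(a) is ultimately periodic if and only if a is ultimately periodic. -/

import Mathlib

/-- `l` is a prefix of the infinite word `w`. -/
def IsPrefixOfInf {α : Type*} (l : List α) (w : ℕ → α) : Prop :=
  ∀ (i : ℕ) (h : i < l.length), l[i] = w i

/-- `b` is the image of the infinite word `a` under the morphism `γ`
(extended to infinite words by concatenation). -/
def IsInfImage {α β : Type*} (γ : α → List β) (a : ℕ → α) (b : ℕ → β) : Prop :=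
  ∀ n : ℕ, IsPrefixOfInf (((List.range n).map a).flatMap γ) b

/-- `w = y · z^ω`. -/
def UltPeriodicWith {α : Type*} (w : ℕ → α) (y z : List α) : Prop :=
  z ≠ [] ∧ ∀ m : ℕ, IsPrefixOfInf (y ++ (List.replicate m z).flatten) w

def UltimatelyPeriodic {α : Type*} (w : ℕ → α) : Prop :=
  ∃ y z : List α, UltPeriodicWith w y z

/-- `x` is a (finite, contiguous) factor of the infinite word `w`. -/
def InfFactorOf {α : Type*} (x : List α) (w : ℕ → α) : Prop :=
  ∃ i : ℕ, x = List.ofFn fun j : Fin x.length => w (i + j)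

/-- adherence of a language -/
def Adherence {α : Type*} (L : Set (List α)) : Set (ℕ → α) :=
  {x | ∀ n : ℕ, ∃ w ∈ L, (List.ofFn fun i : Fin n => x i) <+: w}

section aux
variable {α β : Type*}

lemma flat_rep_len (Z : List α) (m : ℕ) :
    ((List.replicate m Z).flatten).length = m * Z.length := by
  simp [List.length_flatten]

lemma flat_rep_getElem (Z : List α) (hZ : 0 < Z.length) (m j : ℕ)
    (h : j < ((List.replicate m Z).flatten).length) :
    ((List.replicate m Z).flatten)[j] = Z[j % Z.length]'(Nat.mod_lt _ hZ) := by
  induction m generalizing j with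
  | zero => simp at h
  | succ m ih =>
    simp only [List.replicate_succ, List.flatten_cons] at h ⊢
    by_cases hj : j < Z.length
    · rw [List.getElem_append_left hj]
      congr 1
      exact (Nat.mod_eq_of_lt hj).symm
    · push_neg at hj
      rw [List.getElem_append_right hj, ih (j - Z.length) (by simp at h ⊢; omega)]
      congr 1
      conv_rhs => rw [← Nat.sub_add_cancel hj]
      rw [Nat.add_mod_right]

/-- build UltimatelyPeriodic from a function-level eventual period -/
lemma ult_of_fun (w : ℕ → α) (n p : ℕ) (hp : 0 < p)
    (h : ∀ i, n ≤ i → w (i + p) = w i) : UltimatelyPeriodic w := by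
  have hmul : ∀ s r, w (n + r + s * p) = w (n + r) := by
    intro s
    induction s with
    | zero => simp
    | succ s ih =>
      intro r
      have : n + r + (s+1) * p = (n + r + s * p) + p := by ring
      rw [this, h _ (by omega), ih]
  refine ⟨List.ofFn (fun i : Fin n => w i), List.ofFn (fun i : Fin p => w (n + i)), by
    simp [← List.length_eq_zero_iff]; omega, ?_⟩
  intro m i hi
  simp only [List.length_append, List.length_ofFn, flat_rep_len] at hi
  by_cases hin : i < n
  · rw [List.getElem_append_left (by simpa using hin)]
    simp
  · push_neg at hin
    rw [List.getElem_append_right (by simpa using hin)]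
    rw [flat_rep_getElem _ (by simpa using hp) _ _ (by simp [flat_rep_len]; omega)]
    simp only [List.length_ofFn, List.getElem_ofFn]
    have := hmul ((i - n) / p) ((i - n) % p)
    have e : n + (i - n) % p + (i - n) / p * p = i := by
      have := Nat.mod_add_div' (i - n) p; omega
    rw [e] at this
    simpa using this.symm

/-- function-level eventual period from UltPeriodicWith -/
lemma fun_of_ult {w : ℕ → α} {y z : List α} (h : UltPeriodicWith w y z) :
    ∀ i, y.length ≤ i → w (i + z.length) = w i := by
  obtain ⟨hz, h⟩ := h
  have hzl : 0 < z.length := List.length_pos_iff.mpr hz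
  intro i hi
  set m := i + 2 with hm
  have hlen : i + z.length < (y ++ (List.replicate m z).flatten).length := by
    simp [flat_rep_len]
    nlinarith
  have h1 := h m i (by omega)
  have h2 := h m (i + z.length) hlen
  rw [← h1, ← h2]
  rw [List.getElem_append_right (by omega), List.getElem_append_right (by omega)]
  rw [flat_rep_getElem _ hzl _ _ (by simp [flat_rep_len] at hlen ⊢; omega),
      flat_rep_getElem _ hzl _ _ (by simp [flat_rep_len] at hlen ⊢; omega)]
  congr 1
  have : i + z.length - y.length = (i - y.length) + z.length := by omega
  rw [this, Nat.add_mod_right]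

lemma fun_period_mul {w : ℕ → α} {n p : ℕ} (h : ∀ i, n ≤ i → w (i + p) = w i) :
    ∀ t i, n ≤ i → w (i + p * t) = w i := by
  intro t
  induction t with
  | zero => simp
  | succ t ih =>
    intro i hi
    have : i + p * (t+1) = (i + p * t) + p := by ring
    rw [this, h _ (by omega), ih _ hi]

end aux

section aux
variable {α β : Type*}

/-- Key combinatorial lemma: if `p` is below the first difference of `u++v` and `v++u`,
then any word `u ++ (blocks from {u,v})` agrees with `u ++ v` up to position `p`. -/
lemma lemB (u v : List β) (hu : u ≠ []) (p : ℕ)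
    (hfd : ∀ i, i < p → ∀ (h1 : i < (u++v).length) (h2 : i < (v++u).length),
      (u++v)[i] = (v++u)[i]) :
    ∀ (L : List (List β)), (∀ x ∈ L, x = u ∨ x = v) →
      ∀ i, i ≤ p → ∀ (h2 : i < (u ++ L.flatten).length) (h3 : i < (u++v).length),
        (u ++ L.flatten)[i] = (u ++ v)[i] := by
  intro L
  induction L with
  | nil =>
    intro _ i _ h2 h3
    simp only [List.flatten_nil, List.append_nil] at h2
    rw [List.getElem_append_left h2, List.getElem_append_left h2]
  | cons w L' ih =>
    intro hL i hip h2 h3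
    rcases hL w (by simp) with hw | hw
    · -- w = u
      simp only [hw, List.flatten_cons] at h2 ⊢
      by_cases hiu : i < u.length
      · rw [List.getElem_append_left hiu, List.getElem_append_left hiu]
      · push_neg at hiu
        have hu1 : 0 < u.length := List.length_pos_iff.mpr hu
        have h2' : i - u.length < (u ++ L'.flatten).length := by
          simp only [List.length_append] at h2 ⊢; omega
        have h3' : i - u.length < (u ++ v).length := by
          simp only [List.length_append] at h3 ⊢; omega
        rw [List.getElem_append_right hiu]
        have e1 : (u ++ L'.flatten)[i - u.length]'(by
            simpa only [List.length_append] using h2') = (u ++ v)[i - u.length] := by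
          exact ih (fun x hx => hL x (by simp [hx])) (i - u.length) (by omega) _ h3'
        -- (u ++ u ++ L'.flatten)[i] = (u ++ L'.flatten)[i - u.length]
        rw [e1]
        -- now (u++v)[i - u.length] = (u++v)[i]
        have hd : (u ++ v)[i - u.length]'h3' = (v ++ u)[i - u.length]'(by
            simp only [List.length_append] at h3' ⊢; omega) :=
          hfd _ (by omega) _ _
        have h4 : i < (u ++ (v ++ u)).length := by
          simp only [List.length_append] at h3 ⊢; omega
        have e3 : (u ++ (v ++ u))[i]'h4 = (v ++ u)[i - u.length]'(by
            simp only [List.length_append] at h3' ⊢; omega) := by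
          rw [List.getElem_append_right hiu]
        have e4 : (u ++ (v ++ u))[i]'h4 = (u ++ v)[i] := by
          rw [List.getElem_of_eq (List.append_assoc u v u).symm h4]
          exact List.getElem_append_left h3
        rw [hd, ← e3, e4]
    · -- w = v
      simp only [hw, List.flatten_cons] at h2 ⊢
      have e : (u ++ (v ++ L'.flatten))[i]'(by simpa using h2) =
          ((u ++ v) ++ L'.flatten)[i]'(by simpa [List.append_assoc] using h2) := by
        congr 1
        rw [List.append_assoc]
      rw [e, List.getElem_append_left h3]
end aux

section main
variable {β : Type*}

lemma flatMap_len_ge (γ : Fin 2 → List β) (hγ : ∀ g, γ g ≠ []) (l : List (Fin 2)) :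
    l.length ≤ (l.flatMap γ).length := by
  induction l with
  | nil => simp
  | cons h t ih =>
    rw [List.flatMap_cons, List.length_append, List.length_cons]
    have : 0 < (γ h).length := List.length_pos_iff.mpr (hγ h)
    omega

lemma first_letter (γ : Fin 2 → List β) (hγ : ∀ g, γ g ≠ [])
    (hcomm : ∀ g g' : Fin 2, g ≠ g' → γ g ++ γ g' ≠ γ g' ++ γ g)
    (x x' : ℕ → Fin 2) (c : ℕ → β)
    (hx : IsInfImage γ x c) (hx' : IsInfImage γ x' c) : x 0 = x' 0 := by
  classical
  by_contra hne
  set u := γ (x 0) with hu_def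
  set v := γ (x' 0) with hv_def
  have hu : u ≠ [] := hγ _
  have hv : v ≠ [] := hγ _
  have huv : u ++ v ≠ v ++ u := hcomm _ _ hne
  -- first difference
  have hex : ∃ i, ∃ (h1 : i < (u++v).length) (h2 : i < (v++u).length), (u++v)[i] ≠ (v++u)[i] := by
    by_contra hc
    push_neg at hc
    exact huv (List.ext_getElem (by simp [Nat.add_comm]) fun i h1 h2 => hc i h1 h2)
  let p := Nat.find hex
  obtain ⟨hp1, hp2, hpne⟩ : ∃ (h1 : p < (u++v).length) (h2 : p < (v++u).length),
      (u++v)[p] ≠ (v++u)[p] := Nat.find_spec hex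
  have hfd : ∀ i, i < p → ∀ (h1 : i < (u++v).length) (h2 : i < (v++u).length),
      (u++v)[i] = (v++u)[i] := by
    intro i hi h1 h2
    by_contra hcc
    exact Nat.find_min hex hi ⟨h1, h2, hcc⟩
  -- every letter is x 0 or x' 0
  have hall : ∀ g : Fin 2, g = x 0 ∨ g = x' 0 := by
    intro g
    have := g.isLt
    have := (x 0).isLt
    have := (x' 0).isLt
    have hne' : (x 0).val ≠ (x' 0).val := fun h => hne (Fin.ext h)
    have : g.val = (x 0).val ∨ g.val = (x' 0).val := by omega
    rcases this with h | h
    · exact Or.inl (Fin.ext h)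
    · exact Or.inr (Fin.ext h)
  have calc_one : ∀ (y : ℕ → Fin 2) (A B : List β), IsInfImage γ y c → A = γ (y 0) →
      (∀ g : Fin 2, γ g = A ∨ γ g = B) → A ≠ [] →
      ∀ (hAB : p < (A++B).length)
        (hfdAB : ∀ i, i < p → ∀ (h1 : i < (A++B).length) (h2 : i < (B++A).length),
          (A++B)[i] = (B++A)[i]),
      c p = (A++B)[p] := by
    intro y A B hy hA hAll hAne hAB hfdAB
    set L : List (List β) := (((List.range (p+1)).map (fun i => y (i+1))).map γ) with hL
    have hsplit : ((List.range (p+2)).map y).flatMap γ = A ++ L.flatten := by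
      rw [show p + 2 = (p+1) + 1 from rfl, List.range_succ_eq_map]
      rw [List.map_cons, List.flatMap_cons, List.map_map]
      congr 1
      · exact hA.symm
    have hlen : p < (((List.range (p+2)).map y).flatMap γ).length := by
      have := flatMap_len_ge γ hγ ((List.range (p+2)).map y)
      simp only [List.length_map, List.length_range] at this
      omega
    have hc := hy (p+2) p hlen
    rw [← hc]
    have hlen2 : p < (A ++ L.flatten).length := by rw [← hsplit]; exact hlen
    have := lemB A B hAne p hfdAB L (by
      intro w hw
      simp only [hL, List.mem_map] at hw
      obtain ⟨g, _, rfl⟩ := hw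
      exact hAll g) p le_rfl hlen2 hAB
    rw [← this]
    exact List.getElem_of_eq hsplit hlen
  have hAll1 : ∀ g : Fin 2, γ g = u ∨ γ g = v := by
    intro g
    rcases hall g with h | h <;> [exact Or.inl (by rw [h]); exact Or.inr (by rw [h])]
  have hc1 := calc_one x u v hx rfl hAll1 hu hp1 hfd
  have hc2 := calc_one x' v u hx' rfl (fun g => (hAll1 g).symm) hv hp2
    (fun i hi h1 h2 => (hfd i hi h2 h1).symm)
  exact hpne (hc1 ▸ hc2 ▸ rfl)

end main

lemma shift_image {γ : Fin 2 → List β} {x : ℕ → Fin 2} {c : ℕ → β}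
    (h : IsInfImage γ x c) (k : ℕ) :
    IsInfImage γ (fun n => x (k + n))
      (fun j => c ((((List.range k).map x).flatMap γ).length + j)) := by
  intro n i hi
  set N := (((List.range k).map x).flatMap γ).length with hN
  have hsplit : ((List.range (k+n)).map x).flatMap γ
      = ((List.range k).map x).flatMap γ ++ (((List.range n).map (fun i => x (k+i))).flatMap γ) := by
    rw [List.range_add, List.map_append, List.flatMap_append, List.map_map]
    rfl
  have hlen : N + i < (((List.range (k+n)).map x).flatMap γ).length := by
    rw [hsplit, List.length_append]
    omega
  have h2 := h (k+n) (N + i) hlen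
  show _ = c (N + i)
  rw [← h2, List.getElem_of_eq hsplit hlen, List.getElem_append_right (by omega)]
  congr 1
  omega

lemma image_inj (γ : Fin 2 → List β) (hγ : ∀ g, γ g ≠ [])
    (hcomm : ∀ g g' : Fin 2, g ≠ g' → γ g ++ γ g' ≠ γ g' ++ γ g) :
    ∀ (n : ℕ) (x x' : ℕ → Fin 2) (c : ℕ → β),
      IsInfImage γ x c → IsInfImage γ x' c → x n = x' n := by
  intro n
  induction n with
  | zero => exact fun x x' c hx hx' => first_letter γ hγ hcomm x x' c hx hx'
  | succ n ih =>
    intro x x' c hx hx'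
    have h0 : x 0 = x' 0 := first_letter γ hγ hcomm x x' c hx hx'
    have s1 := shift_image hx 1
    have s2 := shift_image hx' 1
    have heq : (fun j => c ((((List.range 1).map x').flatMap γ).length + j))
        = (fun j => c ((((List.range 1).map x).flatMap γ).length + j)) := by
      simp only [show List.range 1 = [0] from rfl, List.map_cons, List.map_nil,
        List.flatMap_cons, List.flatMap_nil, List.append_nil, h0]
    rw [heq] at s2
    have := ih _ _ _ s1 s2
    simpa [Nat.add_comm 1 n] using this


section assembly
variable {β : Type*}

def Nf (γ : Fin 2 → List β) (a : ℕ → Fin 2) (k : ℕ) : ℕ :=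
  (((List.range k).map a).flatMap γ).length

lemma Nf_add (γ : Fin 2 → List β) (a : ℕ → Fin 2) (k d : ℕ) :
    Nf γ a (k + d) = Nf γ a k + (((List.range d).map (fun i => a (k+i))).flatMap γ).length := by
  unfold Nf
  rw [List.range_add, List.map_append, List.flatMap_append, List.length_append, List.map_map]
  rfl

lemma Nf_ge (γ : Fin 2 → List β) (hγ : ∀ g, γ g ≠ []) (a : ℕ → Fin 2) (k : ℕ) :
    k ≤ Nf γ a k := by
  have := flatMap_len_ge γ hγ ((List.range k).map a)
  unfold Nf
  simp only [List.length_map, List.length_range] at this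
  exact this

lemma prefix_eq_range {α : Type*} (l : List α) (w : ℕ → α) (h : IsPrefixOfInf l w) :
    l = (List.range l.length).map w := by
  apply List.ext_getElem (by simp)
  intro i h1 h2
  simp only [List.getElem_map, List.getElem_range]
  exact h i h1

lemma rep_flatMap (γ : Fin 2 → List β) (z : List (Fin 2)) (m : ℕ) :
    ((List.replicate m z).flatten).flatMap γ = (List.replicate m (z.flatMap γ)).flatten := by
  induction m with
  | zero => simp
  | succ m ih => simp [List.replicate_succ, List.flatMap_append, ih]

end assembly


theorem stmt4 {β : Type*} (w0 w1 : List β) (h0 : w0 ≠ []) (h1 : w1 ≠ [])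
    (hnc : w0 ++ w1 ≠ w1 ++ w0) (a : ℕ → Fin 2) (b : ℕ → β)
    (hb : IsInfImage (![w0, w1]) a b) :
    UltimatelyPeriodic b ↔ UltimatelyPeriodic a := by
  set γ : Fin 2 → List β := ![w0, w1] with hγdef
  have hγ : ∀ g : Fin 2, γ g ≠ [] := by
    intro g
    fin_cases g <;> simpa [hγdef]
  have hcomm : ∀ g g' : Fin 2, g ≠ g' → γ g ++ γ g' ≠ γ g' ++ γ g := by
    intro g g' hgg
    fin_cases g <;> fin_cases g' <;> simp_all [hγdef] <;>
      exact fun h => hnc h.symm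
  constructor
  · -- hard direction
    rintro ⟨Y, Z, hUPW⟩
    have hZne : Z ≠ [] := hUPW.1
    have hZpos : 0 < Z.length := List.length_pos_iff.mpr hZne
    have hfun := fun_of_ult hUPW
    have hmul := fun_period_mul hfun
    obtain ⟨x, hx, y, hy, hxy, hfeq⟩ :=
      Finset.exists_ne_map_eq_of_card_lt_of_maps_to
        (s := Finset.range (Z.length + 1)) (t := Finset.range Z.length)
        (by simp) (f := fun j => Nf γ a (Y.length + j) % Z.length)
        (fun j _ => Finset.mem_range.mpr (Nat.mod_lt _ hZpos))
    have key : ∀ j1 j2 : ℕ, j1 < j2 →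
        Nf γ a (Y.length + j1) % Z.length = Nf γ a (Y.length + j2) % Z.length →
        UltimatelyPeriodic a := by
      intro j1 j2 hj hmod
      set k := Y.length + j1 with hk
      set l := Y.length + j2 with hl
      have hkl : k < l := by omega
      have hNmono : Nf γ a k ≤ Nf γ a l := by
        have := Nf_add γ a k (l - k)
        rw [show k + (l - k) = l from by omega] at this
        omega
      have hdvd : Z.length ∣ Nf γ a l - Nf γ a k := (Nat.modEq_iff_dvd' hNmono).mp hmod
      obtain ⟨t, ht⟩ := hdvd
      have hNl : Nf γ a l = Nf γ a k + Z.length * t := by omega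
      have hkge : Y.length ≤ Nf γ a k := le_trans (by omega) (Nf_ge γ hγ a k)
      have s1 := shift_image hb k
      have s2 := shift_image hb l
      have hcc : (fun j => b ((((List.range l).map a).flatMap γ).length + j))
          = (fun j => b ((((List.range k).map a).flatMap γ).length + j)) := by
        funext j
        show b (Nf γ a l + j) = b (Nf γ a k + j)
        have e : Nf γ a l + j = (Nf γ a k + j) + Z.length * t := by omega
        rw [e]
        exact hmul t _ (by omega)
      rw [hcc] at s2
      have haeq : ∀ n, a (k + n) = a (l + n) := fun n =>
        image_inj γ hγ hcomm n _ _ _ s1 s2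
      apply ult_of_fun a k (l - k) (by omega)
      intro i hi
      have := haeq (i - k)
      rw [show k + (i - k) = i from by omega, show l + (i - k) = i + (l - k) from by omega]
        at this
      exact this.symm
    rcases Nat.lt_or_ge x y with h | h
    · exact key x y h hfeq
    · exact key y x (by omega) hfeq.symm
  · -- easy direction
    rintro ⟨y, z, hz, hpre⟩
    refine ⟨y.flatMap γ, z.flatMap γ, ?_, ?_⟩
    · exact List.ne_nil_of_length_pos
        (lt_of_lt_of_le (List.length_pos_iff.mpr hz) (flatMap_len_ge γ hγ z))
    · intro m
      set P := y ++ (List.replicate m z).flatten with hP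
      have hpref : IsPrefixOfInf P a := hpre m
      have hPeq : P = (List.range P.length).map a := prefix_eq_range P a hpref
      have himg := hb P.length
      rw [← hPeq] at himg
      have hdist : P.flatMap γ
          = y.flatMap γ ++ (List.replicate m (z.flatMap γ)).flatten := by
        rw [hP, List.flatMap_append, rep_flatMap]
      rw [hdist] at himg
      exact himg
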